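/- For ν a probability measure on [0,∞) with atom δ = ν({0}) < 1, the S-transform satisfies S_ν(m²/V_ν(m)) = 1/m for all m in the domain of means (m₋(ν), m₀(ν)). -/

import Mathlib

open MeasureTheory Set Filter Topology ENNReal

noncomputable section

/-- Cauchy-Stieltjes moment-type transform `M_ν(θ) = ∫ 1/(1-θx) dν(x)`. -/
def Mcs (ν : Measure ℝ) (θ : ℝ) : ℝ := ∫ x, 1 / (1 - θ * x) ∂ν

/-- The mean map `k_ν(θ) = (M_ν(θ) - 1)/(θ M_ν(θ))`. -/
def kcs (ν : Measure ℝ) (θ : ℝ) : ℝ := (Mcs ν θ - 1) / (θ * Mcs ν θ)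

/-- The Cauchy transform `G_ν(z) = ∫ 1/(z-x) dν(x)`. -/
def Gcs (ν : Measure ℝ) (z : ℝ) : ℝ := ∫ x, 1 / (z - x) ∂ν

/-- `Ψ_ν(z) = ∫ zx/(1-zx) dν(x)`. -/
def PsiT (ν : Measure ℝ) (z : ℝ) : ℝ := ∫ x, z * x / (1 - z * x) ∂ν

/-- Topological support of a measure on ℝ. -/
def msupp (ν : Measure ℝ) : Set ℝ := {x | ∀ U ∈ 𝓝 x, ν U ≠ 0}

/-- The natural parameter domain `(θ₋, θ₊) \ {0}`: nonzero `θ` with `θ x < 1` on the support. -/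
def ΘDom (ν : Measure ℝ) : Set ℝ := {θ | θ ≠ 0 ∧ ∀ x ∈ msupp ν, θ * x < 1}

/-- Right-sided parameter domain `(0, θ₊)`. -/
def ΘPlus (ν : Measure ℝ) : Set ℝ := {θ | 0 < θ ∧ ∀ x ∈ msupp ν, θ * x < 1}

/-- `ψ_ν`, the inverse of the mean map `k_ν` on the parameter domain. -/
def ψcs (ν : Measure ℝ) : ℝ → ℝ := Function.invFunOn (kcs ν) (ΘDom ν)

/-- `ψ_ν` for the right-sided family. -/
def ψplus (ν : Measure ℝ) : ℝ → ℝ := Function.invFunOn (kcs ν) (ΘPlus ν)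

/-- `ψ_ν` for the left-sided family (measures on `[0,∞)`, parameter `θ < 0`). -/
def ψminus (ν : Measure ℝ) : ℝ → ℝ := Function.invFunOn (kcs ν) (Iio 0)

/-- The pseudo-variance function `𝕍_ν(m) = m (1/ψ_ν(m) - m)`. -/
def pseudoVar (ν : Measure ℝ) (m : ℝ) : ℝ := m * (1 / ψcs ν m - m)

def pseudoVarMinus (ν : Measure ℝ) (m : ℝ) : ℝ := m * (1 / ψminus ν m - m)

/-- The tilted measure `P_{θ,ν}(dx) = ν(dx)/(M_ν(θ)(1-θx))`. -/
def tilt (ν : Measure ℝ) (θ : ℝ) : Measure ℝ :=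
  ν.withDensity (fun x => ENNReal.ofReal (1 / (Mcs ν θ * (1 - θ * x))))

/-- `Q_{m,ν}`, the element of the CSK family with mean `m`. -/
def Qcsk (ν : Measure ℝ) (m : ℝ) : Measure ℝ := tilt ν (ψcs ν m)

def QcskMinus (ν : Measure ℝ) (m : ℝ) : Measure ℝ := tilt ν (ψminus ν m)

/-- The variance function `V_ν(m) = ∫ (x-m)² dQ_{m,ν}(x)`. -/
def varFun (ν : Measure ℝ) (m : ℝ) : ℝ := ∫ x, (x - m) ^ 2 ∂(Qcsk ν m)

def varFunMinus (ν : Measure ℝ) (m : ℝ) : ℝ := ∫ x, (x - m) ^ 2 ∂(QcskMinus ν m)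

/-- Domain of means (two-sided). -/
def meanDom (ν : Measure ℝ) : Set ℝ := kcs ν '' ΘDom ν

/-- Right-sided domain of means `(m₀(ν), m₊(ν))`. -/
def meanDomPlus (ν : Measure ℝ) : Set ℝ := kcs ν '' ΘPlus ν

/-- Left-sided domain of means `(m₋(ν), m₀(ν))`. -/
def meanDomMinus (ν : Measure ℝ) : Set ℝ := kcs ν '' Iio 0

/-- `χ_ν`, the inverse of `Ψ_ν` on negative reals. -/
def χT (ν : Measure ℝ) : ℝ → ℝ := Function.invFunOn (PsiT ν) (Iio 0)

/-- The S-transform `S_ν(z) = χ_ν(z)(1+z)/z`. -/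
def Stransf (ν : Measure ℝ) (z : ℝ) : ℝ := χT ν z * (1 + z) / z

/-- `m₋(ν) = -1/G_ν(0)` for a measure on `[0,∞)`. -/
def mMinus (ν : Measure ℝ) : ℝ := -(Gcs ν 0)⁻¹

/-- The self-energy (K-transform) `K_ν(z) = z - 1/G_ν(z)`. -/
def KT (ν : Measure ℝ) (z : ℝ) : ℝ := z - 1 / Gcs ν z

/-- A measure is non-degenerate if it is not a Dirac mass. -/
def Nondeg (ν : Measure ℝ) : Prop := ∀ c : ℝ, ν ≠ Measure.dirac c
def pseudoVarPlus (ν : Measure ℝ) (m : ℝ) : ℝ := m * (1 / ψplus ν m - m)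

def QcskPlus (ν : Measure ℝ) (m : ℝ) : Measure ℝ := tilt ν (ψplus ν m)

def varFunPlus (ν : Measure ℝ) (m : ℝ) : ℝ := ∫ x, (x - m) ^ 2 ∂(QcskPlus ν m)

/-- The mean of a measure on `[0,∞)`, as an extended nonnegative real. -/
def m0E (ν : Measure ℝ) : ℝ≥0∞ := ∫⁻ x, ENNReal.ofReal x ∂ν

/-- The Σ-transform `Σ_ν(z) = S_ν(z/(1-z))`. -/
def SigmaT (ν : Measure ℝ) (z : ℝ) : ℝ := Stransf ν (z / (1 - z))

/-- The free Poisson (Marchenko–Pastur) law with density `(1/2π)√((4-x)/x)` on `(0,4)`. -/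
def freePoisson : Measure ℝ :=
  volume.withDensity (fun x => ENNReal.ofReal
    (Set.indicator (Ioo 0 4) (fun y => (1/(2*Real.pi)) * Real.sqrt ((4 - y)/y)) x))
section AuxProofs

set_option linter.unusedSectionVars false

variable {ν : Measure ℝ} [IsProbabilityMeasure ν]

lemma ae_nonneg_of (hpos : ν (Iio 0) = 0) : ∀ᵐ x ∂ν, 0 ≤ x := by
  rw [ae_iff]
  convert hpos using 2
  ext x; simp [not_le]

lemma integrable_inv_sub {θ : ℝ} (hθ : θ < 0) (hpos : ν (Iio 0) = 0) :
    Integrable (fun x => 1 / (1 - θ * x)) ν := by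
  refine Integrable.mono' (integrable_const 1) ?_ ?_
  · have h : Measurable fun x : ℝ => 1 / (1 - θ * x) := by fun_prop
    exact h.aestronglyMeasurable
  · filter_upwards [ae_nonneg_of hpos] with x hx
    have h1 : (1:ℝ) ≤ 1 - θ * x := by nlinarith
    rw [Real.norm_eq_abs, abs_of_nonneg (by positivity)]
    rw [div_le_one (by linarith)]; linarith

lemma nu_Ioi_pos (hpos : ν (Iio 0) = 0) (hatom : ν {0} < 1) : 0 < ν (Ioi 0) := by
  by_contra h
  push_neg at h
  have h0 : ν (Ioi 0) = 0 := le_antisymm h bot_le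
  have h1 : ν univ ≤ ν (Iio 0) + ν ({0} ∪ Ioi 0) := by
    refine (measure_mono (by intro x _; rcases lt_trichotomy x 0 with h|h|h <;> simp [h])).trans
      (measure_union_le _ _)
  have h2 : ν ({0} ∪ Ioi 0) ≤ ν {0} + ν (Ioi 0) := measure_union_le _ _
  have huniv : ν univ = 1 := measure_univ
  rw [huniv, hpos, zero_add] at h1
  rw [h0, add_zero] at h2
  exact absurd (le_trans h1 h2) hatom.not_ge

lemma Mcs_pos {θ : ℝ} (hθ : θ < 0) (hpos : ν (Iio 0) = 0) : 0 < Mcs ν θ := by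
  have hnn : 0 ≤ᶠ[ae ν] fun x => 1 / (1 - θ * x) := by
    filter_upwards [ae_nonneg_of hpos] with x hx
    have h1 : (1:ℝ) ≤ 1 - θ * x := by nlinarith
    simp only [Pi.zero_apply]
    positivity
  rw [Mcs, integral_pos_iff_support_of_nonneg_ae hnn (integrable_inv_sub hθ hpos)]
  have hmono : ν (Function.support fun x => 1 / (1 - θ * x)) ≥ ν (Ici 0) := by
    apply measure_mono
    intro x hx
    have h1 : (1:ℝ) ≤ 1 - θ * x := by nlinarith [mem_Ici.mp hx]
    simp only [Function.mem_support]
    positivity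
  have hIci : ν (Ici 0) = 1 := by
    have := measure_compl (s := Iio (0:ℝ)) measurableSet_Iio (measure_ne_top ν _)
    simpa [hpos, compl_Iio] using this
  calc (0:ℝ≥0∞) < 1 := by norm_num
    _ = ν (Ici 0) := hIci.symm
    _ ≤ _ := hmono

lemma Mcs_lt_one {θ : ℝ} (hθ : θ < 0) (hpos : ν (Iio 0) = 0) (hatom : ν {0} < 1) :
    Mcs ν θ < 1 := by
  have hnn : 0 ≤ᶠ[ae ν] fun x => 1 - 1 / (1 - θ * x) := by
    filter_upwards [ae_nonneg_of hpos] with x hx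
    have h1 : (1:ℝ) ≤ 1 - θ * x := by nlinarith
    have h2 : 1 / (1 - θ * x) ≤ 1 := by
      rw [div_le_one (by linarith)]; linarith
    simp only [Pi.zero_apply]
    linarith
  have hint : Integrable (fun x => 1 - 1 / (1 - θ * x)) ν :=
    (integrable_const 1).sub (integrable_inv_sub hθ hpos)
  have key : 0 < ∫ x, (1 - 1 / (1 - θ * x)) ∂ν := by
    rw [integral_pos_iff_support_of_nonneg_ae hnn hint]
    refine lt_of_lt_of_le (nu_Ioi_pos hpos hatom) (measure_mono ?_)
    intro x hx
    have hx0 : 0 < x := hx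
    have h1 : (1:ℝ) < 1 - θ * x := by nlinarith
    have h2 : 1 / (1 - θ * x) < 1 := by
      rw [div_lt_one (by linarith)]; linarith
    simp only [Function.mem_support]
    intro hcon; linarith
  have hsub := integral_sub (integrable_const (1:ℝ)) (integrable_inv_sub hθ hpos)
  simp only [integral_const, measure_univ, ENNReal.toReal_one, probReal_univ, mul_one, one_smul, smul_eq_mul] at hsub
  rw [hsub] at key
  rw [Mcs]; linarith

lemma PsiT_eq' {θ : ℝ} (hθ : θ < 0) (hpos : ν (Iio 0) = 0) :
    PsiT ν θ = Mcs ν θ - 1 := by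
  have hcongr : ∫ x, θ * x / (1 - θ * x) ∂ν = ∫ x, (1 / (1 - θ * x) - 1) ∂ν := by
    refine integral_congr_ae ?_
    filter_upwards [ae_nonneg_of hpos] with x hx
    have h1 : (1:ℝ) ≤ 1 - θ * x := by nlinarith
    have hne : (1 - θ * x) ≠ 0 := by linarith
    field_simp
    ring
  rw [PsiT, hcongr, integral_sub (integrable_inv_sub hθ hpos) (integrable_const 1)]
  simp [Mcs]

lemma PsiT_strictMonoOn (hpos : ν (Iio 0) = 0) (hatom : ν {0} < 1) :
    StrictMonoOn (PsiT ν) (Iio 0) := by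
  intro a ha b hb hab
  have ha' : a < 0 := ha
  have hb' : b < 0 := hb
  rw [PsiT_eq' ha' hpos, PsiT_eq' hb' hpos]
  have hnn : 0 ≤ᶠ[ae ν] fun x => 1 / (1 - b * x) - 1 / (1 - a * x) := by
    filter_upwards [ae_nonneg_of hpos] with x hx
    have h1 : (0:ℝ) < 1 - b * x := by nlinarith
    have h2 : 1 - b * x ≤ 1 - a * x := by nlinarith
    have h3 := one_div_le_one_div_of_le h1 h2
    simp only [Pi.zero_apply]
    linarith
  have hint : Integrable (fun x => 1 / (1 - b * x) - 1 / (1 - a * x)) ν :=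
    (integrable_inv_sub hb' hpos).sub (integrable_inv_sub ha' hpos)
  have key : 0 < ∫ x, (1 / (1 - b * x) - 1 / (1 - a * x)) ∂ν := by
    rw [integral_pos_iff_support_of_nonneg_ae hnn hint]
    refine lt_of_lt_of_le (nu_Ioi_pos hpos hatom) (measure_mono ?_)
    intro x hx
    have hx0 : 0 < x := hx
    have h1 : (0:ℝ) < 1 - b * x := by nlinarith
    have h2 : 1 - b * x < 1 - a * x := by nlinarith
    have h3 : 1 / (1 - a * x) < 1 / (1 - b * x) := one_div_lt_one_div_of_lt h1 h2
    simp only [Function.mem_support]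
    intro hcon; linarith
  have hsub := integral_sub (integrable_inv_sub hb' hpos) (integrable_inv_sub ha' hpos)
  rw [hsub] at key
  rw [Mcs, Mcs]
  linarith

end AuxProofs

/-- `S_ν(m²/𝕍_ν(m)) = 1/m` on the domain of means `(m₋(ν), m₀(ν))`. -/
theorem Stransf_pseudoVar (ν : Measure ℝ) [IsProbabilityMeasure ν]
    (hnd : Nondeg ν) (hpos : ν (Iio 0) = 0) (hatom : ν {0} < 1) :
    ∀ m ∈ meanDomMinus ν,
      Stransf ν (m ^ 2 / pseudoVarMinus ν m) = 1 / m := by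
  intro m hm
  obtain ⟨θ₀, hθ₀, hk⟩ := hm
  have hex : ∃ a ∈ Iio 0, kcs ν a = m := ⟨θ₀, hθ₀, hk⟩
  set θ := ψminus ν m with hθdef
  have hθmem : θ ∈ Iio 0 := Function.invFunOn_mem hex
  have hkθ : kcs ν θ = m := Function.invFunOn_eq hex
  have hθ : θ < 0 := hθmem
  have hθne : θ ≠ 0 := ne_of_lt hθ
  set M := Mcs ν θ with hMdef
  have hM0 : 0 < M := Mcs_pos hθ hpos
  have hM1 : M < 1 := Mcs_lt_one hθ hpos hatom
  have hθM : θ * M < 0 := mul_neg_of_neg_of_pos hθ hM0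
  have hmdef : m = (M - 1) / (θ * M) := by rw [← hkθ]; rfl
  have hmpos : 0 < m := by
    rw [hmdef]; exact div_pos_of_neg_of_neg (by linarith) hθM
  have hmne : m ≠ 0 := ne_of_gt hmpos
  have hkey : θ * M * m = M - 1 := by
    rw [hmdef]; field_simp
  have h1mθ : 0 < 1 - θ * m := by nlinarith
  have h1mθne : 1 - θ * m ≠ 0 := ne_of_gt h1mθ
  have hMeq : M = 1 / (1 - θ * m) := by
    rw [eq_div_iff h1mθne]; nlinarith [hkey]
  have hpv : pseudoVarMinus ν m = m * (1 / θ - m) := rfl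
  have hiθ : 1 / θ < 0 := one_div_neg.mpr hθ
  have hd : 1 / θ - m ≠ 0 := by
    have : 1 / θ - m < 0 := by linarith
    linarith
  set z := m ^ 2 / pseudoVarMinus ν m with hz
  have hzval : z = θ * m / (1 - θ * m) := by
    rw [hz, hpv]; field_simp
  have hzne : z ≠ 0 := by
    rw [hzval]
    exact ne_of_lt (div_neg_of_neg_of_pos (by nlinarith) h1mθ)
  have hPsi : PsiT ν θ = z := by
    rw [PsiT_eq' hθ hpos, ← hMdef, hMeq, hzval]
    field_simp
    ring
  have hzex : ∃ a ∈ Iio 0, PsiT ν a = z := ⟨θ, hθmem, hPsi⟩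
  have hχmem : χT ν z ∈ Iio 0 := Function.invFunOn_mem hzex
  have hχeq : PsiT ν (χT ν z) = z := Function.invFunOn_eq hzex
  have hχ : χT ν z = θ :=
    (PsiT_strictMonoOn hpos hatom).injOn hχmem hθmem (hχeq.trans hPsi.symm)
  show Stransf ν z = 1 / m
  rw [Stransf, hχ, hzval]
  field_simp
  ring
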